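/- arXiv:1512.07251 — 9 statements merged into one kernel-verified Lean document; each statement's English description precedes it below -/
import Mathlib

section
/- Let n ≥ 1, r > 0 with r ≠ 1, and let q̄_i > 0 for i = 1,…,n. Let φ ∈ Δ^{n-1} satisfy p_i(φ) = φ_i for all i, where p_i(φ) = q̄_i φ_i^r / Σ_{j=1}^n q̄_j φ_j^r (with the convention 0^r = 0), and let Q = {i : φ_i ≠ 0} (which is nonempty). Then for every i ∈ Q, φ_i = q̄_i^{1/(1−r)} / Σ_{j∈Q} q̄_j^{1/(1−r)}, and φ_i = 0 for i ∉ Q. -/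
/-- Any equilibrium `φ` of the trial-offer market dynamics with social signal
`f x = x ^ r` (`r > 0`, `r ≠ 1`) has coordinates
`φ i = q i ^ (1/(1-r)) / ∑ j ∈ Q, q j ^ (1/(1-r))` on its support
`Q = {i | φ i ≠ 0}`, and zero otherwise. -/
theorem equilibrium_characterisation (n : ℕ) (hn : 1 ≤ n)
    (r : ℝ) (hr : 0 < r) (hr1 : r ≠ 1)
    (q : Fin n → ℝ) (hq : ∀ i, 0 < q i)
    (φ : Fin n → ℝ) (hφ0 : ∀ i, 0 ≤ φ i) (hφ1 : ∑ i, φ i = 1)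
    (heq : ∀ i, q i * φ i ^ r / (∑ j, q j * φ j ^ r) = φ i)
    (Q : Finset (Fin n)) (hQ : ∀ i, i ∈ Q ↔ φ i ≠ 0) :
    Q.Nonempty ∧
    (∀ i ∈ Q, φ i = q i ^ (1 / (1 - r)) / ∑ j ∈ Q, q j ^ (1 / (1 - r))) ∧
    (∀ i ∉ Q, φ i = 0) := by
  have h1r : (1 : ℝ) - r ≠ 0 := sub_ne_zero.mpr (Ne.symm hr1)
  set c : ℝ := 1 / (1 - r) with hc
  set S : ℝ := ∑ j, q j * φ j ^ r with hS
  -- Q is nonempty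
  have hQne : Q.Nonempty := by
    by_contra h
    rw [Finset.not_nonempty_iff_eq_empty] at h
    have : ∀ i, φ i = 0 := fun i => by
      by_contra hi
      have : i ∈ Q := (hQ i).mpr hi
      simp [h] at this
    simp [this] at hφ1
  obtain ⟨i0, hi0⟩ := hQne
  have hφi0 : 0 < φ i0 := lt_of_le_of_ne (hφ0 i0) (Ne.symm ((hQ i0).mp hi0))
  -- S > 0
  have hSpos : 0 < S := by
    rw [hS]
    apply Finset.sum_pos' (fun j _ => mul_nonneg (hq j).le (Real.rpow_nonneg (hφ0 j) r))
    exact ⟨i0, Finset.mem_univ _, mul_pos (hq i0) (Real.rpow_pos_of_pos hφi0 r)⟩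
  -- key: for i ∈ Q, φ i = (q i / S) ^ c
  have key : ∀ i ∈ Q, φ i = (q i / S) ^ c := by
    intro i hi
    have hφi : 0 < φ i := lt_of_le_of_ne (hφ0 i) (Ne.symm ((hQ i).mp hi))
    have hφir : 0 < φ i ^ r := Real.rpow_pos_of_pos hφi r
    have h1 : q i * φ i ^ r = S * φ i := by
      have := heq i
      field_simp [hSpos.ne'] at this
      linarith [this]
    have h2 : φ i ^ (1 - r) = q i / S := by
      rw [Real.rpow_sub hφi, Real.rpow_one, div_eq_div_iff hφir.ne' hSpos.ne']
      linarith [h1]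
    have h3 : (φ i ^ (1 - r)) ^ c = φ i := by
      rw [← Real.rpow_mul hφi.le]
      rw [show (1 - r) * c = 1 by rw [hc]; field_simp, Real.rpow_one]
    rw [← h2, h3]
  -- sum over Q
  have hsumQ : ∑ i ∈ Q, φ i = 1 := by
    rw [← hφ1]
    apply Finset.sum_subset (Finset.subset_univ Q)
    intro x _ hx
    by_contra h
    exact hx ((hQ x).mpr h)
  have hdiv : ∀ i ∈ Q, (q i / S) ^ c = q i ^ c / S ^ c := fun i _ =>
    Real.div_rpow (hq i).le hSpos.le c
  have hsum2 : (∑ i ∈ Q, q i ^ c) / S ^ c = 1 := by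
    rw [Finset.sum_div, ← hsumQ]
    exact (Finset.sum_congr rfl fun i hi => by rw [key i hi, hdiv i hi]).symm
  have hSc : S ^ c = ∑ i ∈ Q, q i ^ c := by
    have hScpos : (0:ℝ) < S ^ c := Real.rpow_pos_of_pos hSpos c
    field_simp at hsum2
    linarith [hsum2]
  refine ⟨⟨i0, hi0⟩, fun i hi => ?_, fun i hi => by
    by_contra h; exact hi ((hQ i).mpr h)⟩
  rw [key i hi, hdiv i hi, hSc]
end

section
/- Let n ≥ 1, r > 0 with r ≠ 1, let q̄_i > 0 for i = 1,…,n, and let Q ⊆ {1,…,n} be nonempty. Define φ ∈ ℝ^n by φ_i = q̄_i^{1/(1−r)} / Σ_{j∈Q} q̄_j^{1/(1−r)} for i ∈ Q and φ_i = 0 for i ∉ Q. Then φ ∈ Δ^{n-1} and φ is an equilibrium, i.e., p_i(φ) = φ_i for all i = 1,…,n, where p_i(φ) = q̄_i φ_i^r / Σ_{j=1}^n q̄_j φ_j^r (with 0^r = 0). -/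
/-- For any nonempty support `Q`, the vector with coordinates
`q i ^ (1/(1-r)) / ∑ j ∈ Q, q j ^ (1/(1-r))` on `Q` and `0` outside `Q`
lies in the simplex and is an equilibrium of the trial-offer market dynamics
with social signal `f x = x ^ r` (`r > 0`, `r ≠ 1`). -/
theorem equilibrium_converse (n : ℕ) (hn : 1 ≤ n)
    (r : ℝ) (hr : 0 < r) (hr1 : r ≠ 1)
    (q : Fin n → ℝ) (hq : ∀ i, 0 < q i)
    (Q : Finset (Fin n)) (hQ : Q.Nonempty)
    (φ : Fin n → ℝ)
    (hφ : ∀ i, φ i =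
      if i ∈ Q then q i ^ (1 / (1 - r)) / ∑ j ∈ Q, q j ^ (1 / (1 - r)) else 0) :
    (∀ i, 0 ≤ φ i) ∧ (∑ i, φ i = 1) ∧
    (∀ i, q i * φ i ^ r / (∑ j, q j * φ j ^ r) = φ i) := by
  set a : ℝ := 1 / (1 - r) with ha
  set s : ℝ := ∑ j ∈ Q, q j ^ a with hs
  have h1r : (1 : ℝ) - r ≠ 0 := sub_ne_zero.mpr (Ne.symm hr1)
  have hterm : ∀ j, 0 < q j ^ a := fun j => Real.rpow_pos_of_pos (hq j) a
  have hspos : 0 < s := Finset.sum_pos (fun j _ => hterm j) hQ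
  have hsr : 0 < s ^ r := Real.rpow_pos_of_pos hspos r
  have h1ar : 1 + a * r = a := by rw [ha]; field_simp; ring
  -- value of q i * φ i ^ r on Q
  have hval : ∀ i ∈ Q, q i * φ i ^ r = q i ^ a / s ^ r := by
    intro i hi
    rw [hφ i, if_pos hi, Real.div_rpow (hterm i).le hspos.le,
      ← Real.rpow_mul (hq i).le, mul_div_assoc',
      ← Real.rpow_one_add' (hq i).le (by rw [h1ar, ha]; exact one_div_ne_zero h1r),
      h1ar]
  have hval0 : ∀ i ∉ Q, q i * φ i ^ r = 0 := by
    intro i hi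
    rw [hφ i, if_neg hi, Real.zero_rpow hr.ne', mul_zero]
  -- the denominator
  have hden : (∑ j, q j * φ j ^ r) = s ^ (1 - r) := by
    rw [← Finset.sum_subset (Finset.subset_univ Q) (fun j _ hj => hval0 j hj),
      Finset.sum_congr rfl hval, ← Finset.sum_div, ← hs,
      Real.rpow_sub hspos, Real.rpow_one]
  refine ⟨fun i => ?_, ?_, fun i => ?_⟩
  · rw [hφ i]
    split
    · exact div_nonneg (hterm i).le hspos.le
    · exact le_rfl
  · have : ∑ i, φ i = ∑ i ∈ Q, φ i := by
      rw [← Finset.sum_subset (Finset.subset_univ Q)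
        (fun j _ hj => by rw [hφ j, if_neg hj])]
    rw [this, Finset.sum_congr rfl (fun i hi => by rw [hφ i, if_pos hi]),
      ← Finset.sum_div, ← hs, div_self hspos.ne']
  · by_cases hi : i ∈ Q
    · rw [hval i hi, hden, hφ i, if_pos hi, div_div,
        ← Real.rpow_add hspos, add_sub_cancel, Real.rpow_one]
    · rw [hval0 i hi, hφ i, if_neg hi, zero_div]
end

section
/- Let n ≥ 1, 0 < r < 1, and q̄_i > 0 for i = 1,…,n. Define φ* ∈ ℝ^n by φ*_i = q̄_i^{1/(1−r)} / Σ_{j=1}^n q̄_j^{1/(1−r)}. Then φ* is the unique equilibrium of p all of whose coordinates are strictly positive; moreover φ*_i > 0 for every i (so the equilibrium is not a monopoly), and whenever q̄_i ≥ q̄_j one has φ*_i ≥ φ*_j. -/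
/-- For `0 < r < 1`, the point `φ*` with `φ*_i = q i ^ (1/(1-r)) / ∑ j, q j ^ (1/(1-r))`
is the unique equilibrium with all coordinates strictly positive; moreover all its
coordinates are strictly positive (no monopoly) and `q j ≤ q i → φ*_j ≤ φ*_i`. -/
theorem inner_equilibrium_unique (n : ℕ) (hn : 1 ≤ n)
    (r : ℝ) (hr0 : 0 < r) (hr1 : r < 1)
    (q : Fin n → ℝ) (hq : ∀ i, 0 < q i)
    (φs : Fin n → ℝ)
    (hφs : ∀ i, φs i = q i ^ (1 / (1 - r)) / ∑ j, q j ^ (1 / (1 - r))) :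
    ((∀ i, 0 ≤ φs i) ∧ (∑ i, φs i = 1) ∧
      (∀ i, q i * φs i ^ r / (∑ j, q j * φs j ^ r) = φs i)) ∧
    (∀ φ : Fin n → ℝ, (∀ i, 0 < φ i) → (∑ i, φ i = 1) →
      (∀ i, q i * φ i ^ r / (∑ j, q j * φ j ^ r) = φ i) → φ = φs) ∧
    (∀ i, 0 < φs i) ∧
    (∀ i j, q j ≤ q i → φs j ≤ φs i) := by
  have hne : (Finset.univ : Finset (Fin n)).Nonempty := by
    have : Nonempty (Fin n) := Fin.pos_iff_nonempty.mp hn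
    exact Finset.univ_nonempty
  have h1r : (0:ℝ) < 1 - r := by linarith
  set α : ℝ := 1 / (1 - r) with hαdef
  have hα : 0 < α := by positivity
  set s : ℝ := ∑ j, q j ^ α with hsdef
  have hspos : 0 < s :=
    Finset.sum_pos (fun j _ => Real.rpow_pos_of_pos (hq j) α) hne
  have hφpos : ∀ i, 0 < φs i := by
    intro i; rw [hφs i]
    exact div_pos (Real.rpow_pos_of_pos (hq i) α) hspos
  have hsum : ∑ i, φs i = 1 := by
    simp_rw [hφs]
    rw [← Finset.sum_div, ← hsdef, div_self hspos.ne']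
  have hαr : 1 + α * r = α := by
    rw [hαdef]; field_simp; ring
  have key : ∀ i, q i * φs i ^ r = q i ^ α / s ^ r := by
    intro i
    rw [hφs i, Real.div_rpow (Real.rpow_pos_of_pos (hq i) α).le hspos.le,
        ← Real.rpow_mul (hq i).le, ← mul_div_assoc]
    congr 1
    nth_rewrite 1 [← Real.rpow_one (q i)]
    rw [← Real.rpow_add (hq i), hαr]
  have hden : ∑ j, q j * φs j ^ r = s ^ (1 - r) := by
    simp_rw [key]
    rw [← Finset.sum_div, ← hsdef, Real.rpow_sub hspos, Real.rpow_one]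
  have heqφs : ∀ i, q i * φs i ^ r / (∑ j, q j * φs j ^ r) = φs i := by
    intro i
    rw [key i, hden, div_div, ← Real.rpow_add hspos]
    rw [show r + (1 - r) = 1 by ring, Real.rpow_one, hφs i]
  refine ⟨⟨fun i => (hφpos i).le, hsum, heqφs⟩, ?_, hφpos, ?_⟩
  · intro φ hφ hsum1 heq
    set D : ℝ := ∑ j, q j * φ j ^ r with hDdef
    have hDpos : 0 < D :=
      Finset.sum_pos (fun j _ => mul_pos (hq j) (Real.rpow_pos_of_pos (hφ j) r)) hne
    have hφeq : ∀ i, φ i = (q i / D) ^ α := by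
      intro i
      have h := heq i
      rw [div_eq_iff hDpos.ne'] at h
      have hr' : (0:ℝ) < φ i ^ r := Real.rpow_pos_of_pos (hφ i) r
      have h2 : φ i ^ (1 - r) = q i / D := by
        rw [Real.rpow_sub (hφ i), Real.rpow_one,
          div_eq_div_iff hr'.ne' hDpos.ne']
        linarith [h]
      have h3 : (φ i ^ (1 - r)) ^ α = φ i := by
        rw [← Real.rpow_mul (hφ i).le,
          show (1 - r) * α = 1 by rw [hαdef]; field_simp, Real.rpow_one]
      rw [← h3, h2]
    have hDs : D ^ α = s := by
      have h1 : ∑ i, (q i / D) ^ α = 1 := by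
        rw [← hsum1]
        exact Finset.sum_congr rfl fun i _ => (hφeq i).symm
      have h2 : ∑ i, (q i / D) ^ α = s / D ^ α := by
        rw [Finset.sum_congr rfl fun i _ => Real.div_rpow (hq i).le hDpos.le α,
          ← Finset.sum_div, hsdef]
      rw [h2, div_eq_one_iff_eq (Real.rpow_pos_of_pos hDpos α).ne'] at h1
      exact h1.symm
    funext i
    rw [hφeq i, hφs i, Real.div_rpow (hq i).le hDpos.le, hDs]
  · intro i j h
    rw [hφs i, hφs j]
    gcongr
    · exact (hq j).le
end

section
/- Let n ≥ 1, r > 0 with r ≠ 1, and q̄_i > 0 for i = 1,…,n. Let φ : [0,∞) → ℝ^n be differentiable with φ(t) ∈ Δ^{n-1} and φ_i(t) > 0 for all i and all t ≥ 0, satisfying the ordinary differential equation φ_i'(t) = p_i(φ(t)) − φ_i(t) for all i and t. Then for all i, j ∈ {1,…,n} and all t ≥ 0: φ_i(t)^{1−r}/q̄_i − φ_j(t)^{1−r}/q̄_j = e^{(r−1)t} [ φ_i(0)^{1−r}/q̄_i − φ_j(0)^{1−r}/q̄_j ]. -/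
/-- Per-term algebraic identity for the derivative computation. -/
lemma ode_term_identity (r x q S : ℝ) (hx : 0 < x) (hq : q ≠ 0) (hS : S ≠ 0) :
    (1 - r) * x ^ (1 - r - 1) * (q * x ^ r / S - x) / q
      = (1 - r) / S - (1 - r) * x ^ (1 - r) / q := by
  have e1 : x ^ (1 - r - 1) * x ^ r = 1 := by
    rw [← Real.rpow_add hx, show (1 - r - 1) + r = 0 by ring, Real.rpow_zero]
  have e2 : x ^ (1 - r - 1) * x = x ^ (1 - r) := by
    calc x ^ (1 - r - 1) * x = x ^ (1 - r - 1) * x ^ (1 : ℝ) := by rw [Real.rpow_one]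
      _ = x ^ (1 - r) := by rw [← Real.rpow_add hx]; ring_nf
  set a := x ^ (1 - r - 1) with ha
  set b := x ^ r with hb
  set c := x ^ (1 - r) with hc
  field_simp
  linear_combination (S * (1 - r) * q + q * (r * S - r + 1 - S)) * e1 - ((1 - r) * S) * e2

/-- Along any positive solution of the mean-field ODE `φ' = p(φ) - φ` of the
trial-offer market with social signal `f x = x ^ r` (`r > 0`, `r ≠ 1`),
`φ_i(t)^{1-r}/q̄_i - φ_j(t)^{1-r}/q̄_j = e^{(r-1)t} (φ_i(0)^{1-r}/q̄_i - φ_j(0)^{1-r}/q̄_j)`. -/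
theorem ode_invariant (n : ℕ) (hn : 1 ≤ n)
    (r : ℝ) (hr0 : 0 < r) (hr1 : r ≠ 1)
    (q : Fin n → ℝ) (hq : ∀ i, 0 < q i)
    (φ : ℝ → Fin n → ℝ)
    (hpos : ∀ t, 0 ≤ t → ∀ i, 0 < φ t i)
    (hsum : ∀ t, 0 ≤ t → ∑ i, φ t i = 1)
    (hode : ∀ i, ∀ t, 0 ≤ t → HasDerivWithinAt (fun s => φ s i)
      (q i * φ t i ^ r / (∑ j, q j * φ t j ^ r) - φ t i) (Set.Ici 0) t) :
    ∀ i j, ∀ t, 0 ≤ t →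
      φ t i ^ (1 - r) / q i - φ t j ^ (1 - r) / q j
        = Real.exp ((r - 1) * t) *
            (φ 0 i ^ (1 - r) / q i - φ 0 j ^ (1 - r) / q j) := by
  intro i j t ht
  haveI : NeZero n := ⟨Nat.one_le_iff_ne_zero.mp hn⟩
  set F : ℝ → ℝ := fun s =>
    Real.exp ((1 - r) * s) * (φ s i ^ (1 - r) / q i - φ s j ^ (1 - r) / q j) with hF_def
  have hF : ∀ s, 0 ≤ s → HasDerivWithinAt F 0 (Set.Ici 0) s := by
    intro s hs
    have hS : 0 < ∑ k, q k * φ s k ^ r := by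
      apply Finset.sum_pos
      · intro k _
        exact mul_pos (hq k) (Real.rpow_pos_of_pos (hpos s hs k) r)
      · exact Finset.univ_nonempty
    set S := ∑ k, q k * φ s k ^ r
    have hterm : ∀ k : Fin n, HasDerivWithinAt (fun u => φ u k ^ (1 - r) / q k)
        ((1 - r) / S - (1 - r) * φ s k ^ (1 - r) / q k) (Set.Ici 0) s := by
      intro k
      have h1 := (hode k s hs).rpow_const (p := 1 - r) (Or.inl (ne_of_gt (hpos s hs k)))
      have h2 := h1.div_const (q k)
      have := ode_term_identity r (φ s k) (q k) S (hpos s hs k)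
        (ne_of_gt (hq k)) (ne_of_gt hS)
      refine h2.congr_deriv ?_
      rw [← this]; ring
    have hdiff := (hterm i).sub (hterm j)
    have hexp : HasDerivWithinAt (fun u => Real.exp ((1 - r) * u))
        (Real.exp ((1 - r) * s) * (1 - r)) (Set.Ici 0) s := by
      exact (((hasDerivAt_id s).const_mul (1 - r)).exp.hasDerivWithinAt).congr_deriv
        (by simp)
    have hmul := hexp.mul hdiff
    refine hmul.congr_deriv ?_
    simp only [Pi.sub_apply]; ring
  have hconst : F t = F 0 := by
    have := constant_of_has_deriv_right_zero
      (f := F) (a := 0) (b := t)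
      (fun s hs => ((hF s hs.1).continuousWithinAt).mono
        (fun x hx => hx.1))
      (fun s hs => (hF s hs.1).mono (Set.Ici_subset_Ici.mpr hs.1))
    exact this t (Set.mem_Icc.mpr ⟨ht, le_refl t⟩)
  have hF0 : F 0 = φ 0 i ^ (1 - r) / q i - φ 0 j ^ (1 - r) / q j := by
    simp [hF_def]
  have key : Real.exp ((1 - r) * t) * (φ t i ^ (1 - r) / q i - φ t j ^ (1 - r) / q j)
      = φ 0 i ^ (1 - r) / q i - φ 0 j ^ (1 - r) / q j := by
    rw [← hF0]; exact hconst
  have hne : Real.exp ((1 - r) * t) ≠ 0 := Real.exp_ne_zero _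
  have hinv : Real.exp ((r - 1) * t) * Real.exp ((1 - r) * t) = 1 := by
    rw [← Real.exp_add]; ring_nf; exact Real.exp_zero
  calc φ t i ^ (1 - r) / q i - φ t j ^ (1 - r) / q j
      = (Real.exp ((r - 1) * t) * Real.exp ((1 - r) * t)) *
          (φ t i ^ (1 - r) / q i - φ t j ^ (1 - r) / q j) := by rw [hinv, one_mul]
    _ = Real.exp ((r - 1) * t) *
          (Real.exp ((1 - r) * t) * (φ t i ^ (1 - r) / q i - φ t j ^ (1 - r) / q j)) := by
        ring
    _ = Real.exp ((r - 1) * t) * (φ 0 i ^ (1 - r) / q i - φ 0 j ^ (1 - r) / q j) := by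
        rw [key]
end

section
/- Let n ≥ 1, 0 < r < 1, and q̄_i > 0 for i = 1,…,n. Let φ : [0,∞) → ℝ^n be differentiable with φ(t) ∈ Δ^{n-1} and φ_i(t) > 0 for all i and all t ≥ 0, satisfying φ_i'(t) = p_i(φ(t)) − φ_i(t) for all i and t. Then φ(t) converges as t → ∞ to the inner equilibrium φ* given by φ*_i = q̄_i^{1/(1−r)} / Σ_{j=1}^n q̄_j^{1/(1−r)}. -/
open Filter Set


/-- Barrier lemma: a function with right derivative `d` on `[0,∞)` that starts
at or above `a` and has strictly positive derivative whenever below `a`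
stays at or above `a`. -/
lemma stay_above {f d : ℝ → ℝ} {a : ℝ}
    (hder : ∀ t ∈ Set.Ici (0:ℝ), HasDerivWithinAt f (d t) (Set.Ici 0) t)
    (h0 : a ≤ f 0)
    (hd : ∀ t, 0 ≤ t → f t < a → 0 < d t) :
    ∀ t, 0 ≤ t → a ≤ f t := by
  intro t₁ ht₁
  by_contra hlt
  push_neg at hlt
  have hcont : ContinuousOn f (Set.Ici 0) := fun x hx =>
    (hder x hx).continuousWithinAt
  have hcont' : ContinuousOn f (Set.Icc 0 t₁) := hcont.mono Set.Icc_subset_Ici_self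
  set S : Set ℝ := Set.Icc 0 t₁ ∩ f ⁻¹' (Set.Ici a) with hS
  have hne : S.Nonempty := ⟨0, ⟨le_refl 0, ht₁⟩, h0⟩
  have hclosed : IsClosed S :=
    hcont'.preimage_isClosed_of_isClosed isClosed_Icc isClosed_Ici
  have hcompact : IsCompact S :=
    isCompact_Icc.of_isClosed_subset hclosed Set.inter_subset_left
  set s := sSup S with hs
  have hsS : s ∈ S := hcompact.sSup_mem hne
  obtain ⟨⟨hs0, hst⟩, hsa⟩ := hsS
  have hsa : a ≤ f s := hsa
  have hsne : s ≠ t₁ := fun h => absurd hsa (by rw [h]; exact not_le.2 hlt)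
  have hslt : s < t₁ := lt_of_le_of_ne hst hsne
  -- on (s, t₁], f < a
  have hbelow : ∀ x, s < x → x ≤ t₁ → f x < a := by
    intro x hx hx'
    by_contra hge
    push_neg at hge
    have : x ∈ S := ⟨⟨le_trans hs0 hx.le, hx'⟩, hge⟩
    have hbdd : BddAbove S := ⟨t₁, fun z hz => hz.1.2⟩
    exact absurd (le_csSup hbdd this) (not_le.2 hx)
  -- f is strictly monotone on [s, t₁]
  have hmono : StrictMonoOn f (Set.Icc s t₁) := by
    apply strictMonoOn_of_hasDerivWithinAt_pos (convex_Icc s t₁)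
      (hcont'.mono (Set.Icc_subset_Icc hs0 le_rfl)) (f' := d)
    · intro x hx
      rw [interior_Icc] at hx
      have hx0 : (0:ℝ) < x := lt_of_le_of_lt hs0 hx.1
      have : HasDerivAt f (d x) x :=
        (hder x hx0.le).hasDerivAt (Ici_mem_nhds hx0)
      exact this.hasDerivWithinAt
    · intro x hx
      rw [interior_Icc] at hx
      exact hd x (le_trans hs0 hx.1.le) (hbelow x hx.1 hx.2.le)
  have := hmono (Set.left_mem_Icc.2 hslt.le) (Set.right_mem_Icc.2 hslt.le) hslt
  linarith

/-- MVT estimate for `x ↦ x^(r-1)`: for `0 < x ≤ y ≤ b`,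
`x^(r-1) - y^(r-1) ≥ (1-r) * b^(r-2) * (y - x)`. -/
lemma rpow_sub_est {r b x y : ℝ} (hr0 : 0 < r) (hr1 : r < 1)
    (hx : 0 < x) (hxy : x ≤ y) (hyb : y ≤ b) :
    (1 - r) * b ^ (r - 2) * (y - x) ≤ x ^ (r - 1) - y ^ (r - 1) := by
  rcases eq_or_lt_of_le hxy with h | h
  · simp [h]
  have hy : 0 < y := lt_trans hx h
  have hb : 0 < b := lt_of_lt_of_le hy hyb
  have hderiv : ∀ z ∈ Set.Ioo x y, HasDerivAt (fun z : ℝ => z ^ (r - 1))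
      ((r - 1) * z ^ (r - 1 - 1)) z := by
    intro z hz
    exact Real.hasDerivAt_rpow_const (Or.inl (ne_of_gt (lt_trans hx hz.1)))
  have hcont : ContinuousOn (fun z : ℝ => z ^ (r - 1)) (Set.Icc x y) := by
    intro z hz
    exact (Real.continuousAt_rpow_const z (r-1)
      (Or.inl (ne_of_gt (lt_of_lt_of_le hx hz.1)))).continuousWithinAt
  obtain ⟨c, hc, hceq⟩ := exists_hasDerivAt_eq_slope (fun z : ℝ => z ^ (r - 1))
    (fun z => (r - 1) * z ^ (r - 1 - 1)) h hcont hderiv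
  have hc0 : 0 < c := lt_trans hx hc.1
  have hcb : c ≤ b := le_trans hc.2.le hyb
  -- c ^ (r - 2) ≥ b ^ (r - 2)
  have hpow : b ^ (r - 2) ≤ c ^ (r - 2) :=
    Real.rpow_le_rpow_of_nonpos hc0 hcb (by linarith)
  have hyx : y - x ≠ 0 := ne_of_gt (by linarith)
  rw [eq_div_iff hyx] at hceq
  have key : y ^ (r-1) - x ^ (r-1) = (r - 1) * c ^ (r - 1 - 1) * (y - x) := by
    linarith [hceq]
  have : (r - 1) * c ^ (r - 1 - 1) ≤ (r - 1) * b ^ (r - 2) := by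
    have : r - 1 - 1 = r - 2 := by ring
    rw [this]
    exact mul_le_mul_of_nonpos_left hpow (by linarith)
  nlinarith [Real.rpow_pos_of_pos hb (r-2), Real.rpow_pos_of_pos hc0 (r-2)]

lemma deriv_ratio_eq {ci cj x y Dv P V : ℝ} (hci : ci ≠ 0) (hcj : cj ≠ 0)
    (hx : x ≠ 0) (hy : y ≠ 0) (hD : Dv ≠ 0) :
    ((ci * (cj * V / Dv - y)) * (cj * x) - (ci * y) * (cj * (ci * P / Dv - x))) / (cj * x) ^ 2
      = ((y / cj) / (x / ci)) * (V / (y / cj) - P / (x / ci)) / Dv := by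
  field_simp
  ring

/-- Pointwise contraction estimate for the ratio dynamics. -/
lemma contraction_ineq {r D Q b m u v : ℝ} (hr0 : 0 < r) (hr1 : r < 1)
    (hu : 0 < u) (hv : 0 < v) (hD : 0 < D) (hDQ : D ≤ Q)
    (hub : u ≤ b) (hvb : v ≤ b) (hm : m ≤ v) (hm0 : 0 < m) :
    (v / u - 1) * (v / u * (v ^ (r - 1) - u ^ (r - 1)) / D)
      ≤ -((1 - r) * b ^ (r - 2) * m / Q) * (v / u - 1) ^ 2 := by
  have hb : 0 < b := lt_of_lt_of_le hv hvb
  have hQ : 0 < Q := lt_of_lt_of_le hD hDQ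
  set K := (1 - r) * b ^ (r - 2) with hK
  have hK0 : 0 < K := by
    have h2 := Real.rpow_pos_of_pos hb (r - 2)
    have h1 : 0 < 1 - r := by linarith
    exact mul_pos h1 h2
  have hvDmQ : m / Q ≤ v / D := by
    calc m / Q ≤ v / Q := by gcongr
    _ ≤ v / D := by gcongr
  -- reduce to the multiplied-out form
  have hmain : (v - u) * v * (v ^ (r - 1) - u ^ (r - 1)) / D ≤ -(K * m / Q) * (v - u) ^ 2 := by
    rcases le_total u v with huv | huv
    · have hest := rpow_sub_est hr0 hr1 hu huv hvb
      rw [← hK] at hest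
      -- (v-u) ≥ 0, Δ ≤ -K (v-u)
      have h1 : (v - u) * v * (v ^ (r - 1) - u ^ (r - 1)) ≤ -(K * v) * (v - u) ^ 2 := by
        nlinarith [mul_le_mul_of_nonneg_left hest (mul_nonneg (sub_nonneg.2 huv) hv.le)]
      calc (v - u) * v * (v ^ (r - 1) - u ^ (r - 1)) / D
          ≤ -(K * v) * (v - u) ^ 2 / D := by gcongr
        _ = -(K * (v / D)) * (v - u) ^ 2 := by ring
        _ ≤ -(K * (m / Q)) * (v - u) ^ 2 := by
            have : K * (m / Q) ≤ K * (v / D) := by gcongr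
            nlinarith [sq_nonneg (v - u)]
        _ = -(K * m / Q) * (v - u) ^ 2 := by ring
    · have hest := rpow_sub_est hr0 hr1 hv huv hub
      rw [← hK] at hest
      have h1 : (v - u) * v * (v ^ (r - 1) - u ^ (r - 1)) ≤ -(K * v) * (v - u) ^ 2 := by
        nlinarith [mul_le_mul_of_nonneg_left hest (mul_nonneg (sub_nonneg.2 huv) hv.le)]
      calc (v - u) * v * (v ^ (r - 1) - u ^ (r - 1)) / D
          ≤ -(K * v) * (v - u) ^ 2 / D := by gcongr
        _ = -(K * (v / D)) * (v - u) ^ 2 := by ring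
        _ ≤ -(K * (m / Q)) * (v - u) ^ 2 := by
            have : K * (m / Q) ≤ K * (v / D) := by gcongr
            nlinarith [sq_nonneg (v - u)]
        _ = -(K * m / Q) * (v - u) ^ 2 := by ring
  -- now divide by u^2
  have hgoal : (v / u - 1) * (v / u * (v ^ (r - 1) - u ^ (r - 1)) / D)
      = ((v - u) * v * (v ^ (r - 1) - u ^ (r - 1)) / D) / u ^ 2 := by
    field_simp
  have hgoal2 : -(K * m / Q) * (v / u - 1) ^ 2
      = (-(K * m / Q) * (v - u) ^ 2) / u ^ 2 := by
    field_simp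
  rw [hgoal, hgoal2]
  gcongr

/-- For `0 < r < 1`, any positive solution of the mean-field ODE `φ' = p(φ) - φ`
of the trial-offer market converges, as `t → ∞`, to the inner equilibrium
`φ*_i = q̄_i^{1/(1-r)} / ∑_j q̄_j^{1/(1-r)}`. -/
theorem ode_converges_to_inner_equilibrium (n : ℕ) (hn : 1 ≤ n)
    (r : ℝ) (hr0 : 0 < r) (hr1 : r < 1)
    (q : Fin n → ℝ) (hq : ∀ i, 0 < q i)
    (φ : ℝ → Fin n → ℝ)
    (hpos : ∀ t, 0 ≤ t → ∀ i, 0 < φ t i)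
    (hsum : ∀ t, 0 ≤ t → ∑ i, φ t i = 1)
    (hode : ∀ i, ∀ t, 0 ≤ t → HasDerivWithinAt (fun s => φ s i)
      (q i * φ t i ^ r / (∑ j, q j * φ t j ^ r) - φ t i) (Set.Ici 0) t) :
    ∀ i, Tendsto (fun t => φ t i) atTop
      (nhds (q i ^ (1 / (1 - r)) / ∑ j, q j ^ (1 / (1 - r)))) := by
  have hn' : Nonempty (Fin n) := Fin.pos_iff_nonempty.1 hn
  have h1r : (0:ℝ) < 1 - r := by linarith
  set c : Fin n → ℝ := fun i => q i ^ (1 / (1 - r)) with hc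
  have hcpos : ∀ i, 0 < c i := fun i => Real.rpow_pos_of_pos (hq i) _
  have hcq : ∀ i, c i ^ (1 - r) = q i := by
    intro i
    rw [hc, ← Real.rpow_mul (hq i).le, one_div, inv_mul_cancel₀ (ne_of_gt h1r),
      Real.rpow_one]
  set Q : ℝ := ∑ j, q j with hQdef
  have hQ : 0 < Q := Finset.sum_pos (fun j _ => hq j) Finset.univ_nonempty
  set D : ℝ → ℝ := fun t => ∑ j, q j * φ t j ^ r with hDdef
  have hφle1 : ∀ t, 0 ≤ t → ∀ i, φ t i ≤ 1 := by
    intro t ht i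
    calc φ t i ≤ ∑ j, φ t j :=
          Finset.single_le_sum (fun j _ => (hpos t ht j).le) (Finset.mem_univ i)
      _ = 1 := hsum t ht
  have hDpos : ∀ t, 0 ≤ t → 0 < D t := by
    intro t ht
    exact Finset.sum_pos (fun j _ => mul_pos (hq j)
      (Real.rpow_pos_of_pos (hpos t ht j) r)) Finset.univ_nonempty
  have hDQ : ∀ t, 0 ≤ t → D t ≤ Q := by
    intro t ht
    apply Finset.sum_le_sum
    intro j _
    have : φ t j ^ r ≤ 1 :=
      Real.rpow_le_one (hpos t ht j).le (hφle1 t ht j) hr0.le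
    nlinarith [hq j]
  -- Step 1: uniform positive lower bounds
  set a : Fin n → ℝ := fun k => min (φ 0 k) ((q k / Q) ^ (1 / (1 - r))) with ha
  have hapos : ∀ k, 0 < a k := fun k =>
    lt_min (hpos 0 le_rfl k) (Real.rpow_pos_of_pos (div_pos (hq k) hQ) _)
  have hbar : ∀ k, ∀ t, 0 ≤ t → a k ≤ φ t k := by
    intro k
    apply stay_above (d := fun t => q k * φ t k ^ r / D t - φ t k)
    · exact fun t ht => hode k t ht
    · exact min_le_left _ _
    · intro t ht hlt
      set x := φ t k with hx
      have hx0 : 0 < x := hpos t ht k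
      have hxlt : x < (q k / Q) ^ (1 / (1 - r)) := lt_of_lt_of_le hlt (min_le_right _ _)
      have hstep1 : x ^ (1 - r) < q k / Q := by
        have := Real.rpow_lt_rpow hx0.le hxlt h1r
        rwa [← Real.rpow_mul (div_pos (hq k) hQ).le, one_div,
          inv_mul_cancel₀ (ne_of_gt h1r), Real.rpow_one] at this
      have hxsplit : x ^ r * x ^ (1 - r) = x := by
        rw [← Real.rpow_add hx0, add_sub_cancel, Real.rpow_one]
      have hxr : 0 < x ^ r := Real.rpow_pos_of_pos hx0 r
      have hstep2 : Q * x < q k * x ^ r := by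
        calc Q * x = Q * x ^ (1 - r) * x ^ r := by rw [mul_assoc, mul_comm (x ^ (1-r)), hxsplit]
          _ < Q * (q k / Q) * x ^ r := by
              apply mul_lt_mul_of_pos_right _ hxr
              exact mul_lt_mul_of_pos_left hstep1 hQ
          _ = q k * x ^ r := by field_simp
      have hstep3 : x < q k * x ^ r / D t := by
        have h1 : x < q k * x ^ r / Q := by
          rw [lt_div_iff₀ hQ]; linarith
        have h2 : q k * x ^ r / Q ≤ q k * x ^ r / D t := by
          exact div_le_div_of_nonneg_left (mul_pos (hq k) hxr).le (hDpos t ht) (hDQ t ht)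
        linarith
      linarith
  -- Step 2: pairwise ratio convergence
  have hratio : ∀ i j, Tendsto (fun t => (c i * φ t j) / (c j * φ t i)) atTop (nhds 1) := by
    intro i j
    set ρ : ℝ → ℝ := fun t => (c i * φ t j) / (c j * φ t i) with hρ
    set ρd : ℝ → ℝ := fun t =>
      ((c i * (q j * φ t j ^ r / D t - φ t j)) * (c j * φ t i) -
        (c i * φ t j) * (c j * (q i * φ t i ^ r / D t - φ t i))) / (c j * φ t i) ^ 2 with hρd
    have hρder : ∀ t ∈ Set.Ici (0:ℝ), HasDerivWithinAt ρ (ρd t) (Set.Ici 0) t := by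
      intro t ht
      have h1 := (hode j t ht).const_mul (c i)
      have h2 := (hode i t ht).const_mul (c j)
      have hne : c j * φ t i ≠ 0 := ne_of_gt (mul_pos (hcpos j) (hpos t ht i))
      exact h1.div h2 hne
    -- rewrite the derivative in ratio form
    have hρdeq : ∀ t, 0 ≤ t → ρd t =
        ((φ t j / c j) / (φ t i / c i)) *
          ((φ t j / c j) ^ (r - 1) - (φ t i / c i) ^ (r - 1)) / D t := by
      intro t ht
      have hxi : 0 < φ t i := hpos t ht i
      have hxj : 0 < φ t j := hpos t ht j
      have hui : 0 < φ t i / c i := div_pos hxi (hcpos i)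
      have huj : 0 < φ t j / c j := div_pos hxj (hcpos j)
      have hqi : q i * φ t i ^ r = c i * (φ t i / c i) ^ r := by
        rw [Real.div_rpow hxi.le (hcpos i).le, ← hcq i,
          Real.rpow_sub (hcpos i), Real.rpow_one]
        field_simp
      have hqj : q j * φ t j ^ r = c j * (φ t j / c j) ^ r := by
        rw [Real.div_rpow hxj.le (hcpos j).le, ← hcq j,
          Real.rpow_sub (hcpos j), Real.rpow_one]
        field_simp
      have hri : (φ t i / c i) ^ (r - 1) = (φ t i / c i) ^ r / (φ t i / c i) :=
        Real.rpow_sub_one hui.ne' r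
      have hrj : (φ t j / c j) ^ (r - 1) = (φ t j / c j) ^ r / (φ t j / c j) :=
        Real.rpow_sub_one huj.ne' r
      rw [hρd]
      simp only
      rw [hqi, hqj, hri, hrj]
      exact deriv_ratio_eq (hcpos i).ne' (hcpos j).ne' hxi.ne' hxj.ne'
        (hDpos t ht).ne'
    -- constants for the contraction
    set b : ℝ := max (1 / c i) (1 / c j) with hb
    set m : ℝ := a j / c j with hm
    have hm0 : 0 < m := div_pos (hapos j) (hcpos j)
    set κ : ℝ := (1 - r) * b ^ (r - 2) * m / Q with hκdef
    have hbpos : 0 < b := lt_of_lt_of_le (one_div_pos.2 (hcpos i)) (le_max_left _ _)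
    have hκ : 0 < κ := by
      have h2 := Real.rpow_pos_of_pos hbpos (r - 2)
      rw [hκdef]
      exact div_pos (mul_pos (mul_pos h1r h2) hm0) hQ
    -- contraction estimate
    have hcontr : ∀ t, 0 ≤ t → 2 * (ρ t - 1) * ρd t ≤ -(2 * κ) * (ρ t - 1) ^ 2 := by
      intro t ht
      have hxi : 0 < φ t i := hpos t ht i
      have hxj : 0 < φ t j := hpos t ht j
      have hui : 0 < φ t i / c i := div_pos hxi (hcpos i)
      have huj : 0 < φ t j / c j := div_pos hxj (hcpos j)
      have hub : φ t i / c i ≤ b := le_trans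
        ((div_le_div_iff_of_pos_right (hcpos i)).2 (hφle1 t ht i)) (le_max_left _ _)
      have hvb : φ t j / c j ≤ b := le_trans
        ((div_le_div_iff_of_pos_right (hcpos j)).2 (hφle1 t ht j)) (le_max_right _ _)
      have hmv : m ≤ φ t j / c j := by
        rw [hm]; exact (div_le_div_iff_of_pos_right (hcpos j)).2 (hbar j t ht)
      have hρeq : ρ t = (φ t j / c j) / (φ t i / c i) := by
        rw [hρ]; simp only; field_simp
      have key := contraction_ineq hr0 hr1 hui huj (hDpos t ht) (hDQ t ht)
        hub hvb hmv hm0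
      rw [hρdeq t ht, hρeq]
      calc 2 * ((φ t j / c j) / (φ t i / c i) - 1) *
            ((φ t j / c j) / (φ t i / c i) *
              ((φ t j / c j) ^ (r - 1) - (φ t i / c i) ^ (r - 1)) / D t)
          ≤ 2 * (-((1 - r) * b ^ (r - 2) * m / Q) *
              ((φ t j / c j) / (φ t i / c i) - 1) ^ 2) := by
            rw [mul_assoc]
            exact mul_le_mul_of_nonneg_left key (by norm_num)
        _ = -(2 * κ) * ((φ t j / c j) / (φ t i / c i) - 1) ^ 2 := by
            rw [hκdef]; ring
    -- the squared distance and its derivative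
    set g : ℝ → ℝ := fun t => (ρ t - 1) ^ 2 with hg
    have hgder : ∀ t ∈ Set.Ici (0:ℝ),
        HasDerivWithinAt g (2 * (ρ t - 1) * ρd t) (Set.Ici 0) t := by
      intro t ht
      have := ((hρder t ht).sub_const 1).pow 2
      simp at this
      exact this
    -- Gronwall
    have hgle : ∀ t, 0 ≤ t → g t ≤ g 0 * Real.exp (-(2 * κ) * t) := by
      intro T hT
      have hcont0 : ContinuousOn g (Set.Ici 0) := fun x hx =>
        (hgder x hx).continuousWithinAt
      have hcont : ContinuousOn g (Set.Icc 0 T) := hcont0.mono Set.Icc_subset_Ici_self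
      have hfr : ∀ x ∈ Set.Ico 0 T, ∀ z, 2 * (ρ x - 1) * ρd x < z →
          ∃ᶠ w in nhdsWithin x (Set.Ioi x), (w - x)⁻¹ * (g w - g x) < z := by
        intro x hx z hz
        exact ((hgder x hx.1).mono (Set.Ici_subset_Ici.2 hx.1)).liminf_right_slope_le hz
      have hbound : ∀ x ∈ Set.Ico 0 T,
          2 * (ρ x - 1) * ρd x ≤ -(2 * κ) * g x + 0 := by
        intro x hx
        rw [add_zero]
        exact hcontr x hx.1
      have := le_gronwallBound_of_liminf_deriv_right_le hcont hfr le_rfl hbound T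
        (Set.mem_Icc.2 ⟨hT, le_rfl⟩)
      rwa [sub_zero, gronwallBound_ε0] at this
    have hg0 : Tendsto g atTop (nhds 0) := by
      have hexp : Tendsto (fun t => g 0 * Real.exp (-(2 * κ) * t)) atTop (nhds 0) := by
        have h2 : Tendsto (fun t : ℝ => -(2 * κ) * t) atTop atBot :=
          (tendsto_const_mul_atBot_of_neg (by linarith)).2 tendsto_id
        have h3 := (Real.tendsto_exp_atBot.comp h2).const_mul (g 0)
        simpa using h3
      apply tendsto_of_tendsto_of_tendsto_of_le_of_le' tendsto_const_nhds hexp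
      · exact Eventually.of_forall fun t => sq_nonneg _
      · filter_upwards [eventually_ge_atTop (0:ℝ)] with t ht
        exact hgle t ht
    have habs : Tendsto (fun t => |ρ t - 1|) atTop (nhds 0) := by
      have h4 := (Real.continuous_sqrt.tendsto' 0 0 Real.sqrt_zero).comp hg0
      simp only [Function.comp_def, hg, Real.sqrt_sq_eq_abs] at h4
      exact h4
    have hsub : Tendsto (fun t => ρ t - 1) atTop (nhds 0) :=
      (tendsto_zero_iff_abs_tendsto_zero _).2 habs
    have := hsub.add_const 1
    simpa using this
  -- Step 4: conclusion
  intro i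
  have hC : 0 < ∑ j, c j := Finset.sum_pos (fun j _ => hcpos j) Finset.univ_nonempty
  have hSsum : Tendsto (fun t => ∑ j, c j * ((c i * φ t j) / (c j * φ t i))) atTop
      (nhds (∑ j, c j)) := by
    have := tendsto_finset_sum (Finset.univ : Finset (Fin n))
      (fun j _ => ((hratio i j).const_mul (c j)))
    simpa using this
  have hdiv : Tendsto (fun t => c i / ∑ j, c j * ((c i * φ t j) / (c j * φ t i))) atTop
      (nhds (c i / ∑ j, c j)) := tendsto_const_nhds.div hSsum (ne_of_gt hC)
  apply hdiv.congr'
  filter_upwards [eventually_ge_atTop (0:ℝ)] with t ht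
  have hφi : 0 < φ t i := hpos t ht i
  have hterm : ∀ j, c j * ((c i * φ t j) / (c j * φ t i)) = (c i / φ t i) * φ t j := by
    intro j
    have := (hcpos j).ne'
    field_simp
  have hsum' : ∑ j, c j * ((c i * φ t j) / (c j * φ t i)) = c i / φ t i := by
    rw [Finset.sum_congr rfl (fun j _ => hterm j), ← Finset.mul_sum, hsum t ht, mul_one]
  rw [hsum', div_div_eq_mul_div, mul_comm, mul_div_assoc,
    div_self (ne_of_gt (hcpos i)), mul_one]
end

section
/- Let n ≥ 2, r > 1, and q̄_i > 0 for i = 1,…,n. Let φ : [0,∞) → ℝ^n be differentiable with φ(t) ∈ Δ^{n-1} and φ_i(t) > 0 for all i and all t ≥ 0, satisfying φ_i'(t) = p_i(φ(t)) − φ_i(t) for all i and t. If two indices i ≠ j satisfy φ_i(0)^{1−r}/q̄_i > φ_j(0)^{1−r}/q̄_j, then φ_i(t) → 0 as t → ∞. -/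
open Filter

/-- For `r > 1`, along any positive solution of the mean-field ODE `φ' = p(φ) - φ`,
if two indices `i ≠ j` satisfy `φ_i(0)^{1-r}/q̄_i > φ_j(0)^{1-r}/q̄_j`, then
`φ_i(t) → 0` as `t → ∞`. -/
theorem ode_superlinear_extinction (n : ℕ) (hn : 2 ≤ n)
    (r : ℝ) (hr : 1 < r)
    (q : Fin n → ℝ) (hq : ∀ i, 0 < q i)
    (φ : ℝ → Fin n → ℝ)
    (hpos : ∀ t, 0 ≤ t → ∀ i, 0 < φ t i)
    (hsum : ∀ t, 0 ≤ t → ∑ i, φ t i = 1)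
    (hode : ∀ i, ∀ t, 0 ≤ t → HasDerivWithinAt (fun s => φ s i)
      (q i * φ t i ^ r / (∑ j, q j * φ t j ^ r) - φ t i) (Set.Ici 0) t)
    (i j : Fin n) (hij : i ≠ j)
    (hinit : φ 0 j ^ (1 - r) / q j < φ 0 i ^ (1 - r) / q i) :
    Tendsto (fun t => φ t i) atTop (nhds 0) := by
  have hr0 : (0:ℝ) < r - 1 := by linarith
  set D : ℝ → ℝ := fun t => ∑ k, q k * φ t k ^ r with hDdef
  have hD : ∀ t, 0 ≤ t → 0 < D t := by
    intro t ht
    have : Nonempty (Fin n) := ⟨⟨0, by omega⟩⟩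
    apply Finset.sum_pos
    · intro k _
      exact mul_pos (hq k) (Real.rpow_pos_of_pos (hpos t ht k) r)
    · exact Finset.univ_nonempty
  set u : Fin n → ℝ → ℝ := fun k t => φ t k ^ (1 - r) / q k with hudef
  have hu : ∀ k, ∀ t, 0 ≤ t →
      HasDerivWithinAt (u k) ((r - 1) * (u k t - (D t)⁻¹)) (Set.Ici 0) t := by
    intro k t ht
    have hx : 0 < φ t k := hpos t ht k
    have h1 : HasDerivAt (fun x : ℝ => x ^ (1 - r)) ((1 - r) * φ t k ^ (1 - r - 1)) (φ t k) :=
      Real.hasDerivAt_rpow_const (Or.inl hx.ne')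
    have h2 : HasDerivWithinAt (fun s => φ s k ^ (1 - r))
        ((1 - r) * φ t k ^ (1 - r - 1) * (q k * φ t k ^ r / D t - φ t k)) (Set.Ici 0) t :=
      by have := h1.comp_hasDerivWithinAt t (hode k t ht); exact this
    have h3 := h2.div_const (q k)
    rw [show (1:ℝ) - r - 1 = -r by ring] at h3
    refine h3.congr_deriv ?_; symm
    have e1 : φ t k ^ (-r) * φ t k ^ r = 1 := by
      rw [← Real.rpow_add hx]; norm_num
    have e2 : φ t k ^ (-r) * φ t k = φ t k ^ (1 - r) := by
      have := Real.rpow_add_one hx.ne' (-r)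
      rw [show -r + 1 = 1 - r by ring] at this
      rw [this]
    have hqk : q k ≠ 0 := (hq k).ne'
    have hDne : D t ≠ 0 := (hD t ht).ne'
    simp only [hudef]
    linear_combination ((r - 1) / D t) * e1 - ((r - 1) / q k) * e2 +
      ((r - 1) / D t * φ t k ^ (-r) * φ t k ^ r) * mul_inv_cancel₀ hqk
  set V : ℝ → ℝ := fun t => u i t - u j t with hVdef
  have hVd : ∀ t, 0 ≤ t → HasDerivWithinAt V ((r - 1) * V t) (Set.Ici 0) t := by
    intro t ht
    have h := (hu i t ht).sub (hu j t ht)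
    refine h.congr_deriv ?_; symm
    simp only [hVdef]; ring
  set g : ℝ → ℝ := fun t => V t * Real.exp (-(r - 1) * t) with hgdef
  have hE : ∀ t : ℝ, HasDerivAt (fun s => Real.exp (-(r - 1) * s))
      (Real.exp (-(r - 1) * t) * -(r - 1)) t := by
    intro t
    have h1 : HasDerivAt (fun s : ℝ => -(r - 1) * s) (-(r - 1)) t := by
      simpa using (hasDerivAt_id t).const_mul (-(r - 1))
    exact h1.exp
  have hg : ∀ t, 0 ≤ t → HasDerivWithinAt g 0 (Set.Ici 0) t := by
    intro t ht
    have h := (hVd t ht).mul (hE t).hasDerivWithinAt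
    refine h.congr_deriv ?_; symm
    ring
  have hconst : ∀ t, 0 ≤ t → g t = g 0 := by
    intro t ht
    refine constant_of_has_deriv_right_zero (a := 0) (b := t)
      (fun x hx => ((hg x hx.1).continuousWithinAt).mono (fun y hy => hy.1))
      (fun x hx => (hg x hx.1).mono (Set.Ici_subset_Ici.mpr hx.1)) t ⟨ht, le_refl t⟩
  have hc : 0 < V 0 := by simp only [hVdef, hudef]; linarith
  have hVt : ∀ t, 0 ≤ t → V t = V 0 * Real.exp ((r - 1) * t) := by
    intro t ht
    have h := hconst t ht
    simp only [hgdef, mul_zero, Real.exp_zero, mul_one] at h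
    have h2 := congrArg (fun x => x * Real.exp ((r - 1) * t)) h
    rw [mul_assoc, ← Real.exp_add,
      show -(r - 1) * t + (r - 1) * t = 0 by ring, Real.exp_zero, mul_one] at h2
    exact h2
  have hbound : ∀ t, 0 ≤ t →
      φ t i ≤ ((q i * V 0 * Real.exp ((r - 1) * t))⁻¹) ^ (r - 1)⁻¹ := by
    intro t ht
    have hx : 0 < φ t i := hpos t ht i
    have hA : 0 < q i * V 0 * Real.exp ((r - 1) * t) :=
      mul_pos (mul_pos (hq i) hc) (Real.exp_pos _)
    have h1 : q i * V 0 * Real.exp ((r - 1) * t) ≤ φ t i ^ (1 - r) := by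
      have huj : 0 < u j t := div_pos (Real.rpow_pos_of_pos (hpos t ht j) _) (hq j)
      have hVle : V 0 * Real.exp ((r - 1) * t) ≤ u i t := by
        have h' : u i t - u j t = V 0 * Real.exp ((r - 1) * t) := hVt t ht
        linarith
      have : V 0 * Real.exp ((r - 1) * t) ≤ φ t i ^ (1 - r) / q i := hVle
      calc q i * V 0 * Real.exp ((r - 1) * t)
          = q i * (V 0 * Real.exp ((r - 1) * t)) := by ring
        _ ≤ q i * (φ t i ^ (1 - r) / q i) := by
            exact mul_le_mul_of_nonneg_left this (hq i).le
        _ = φ t i ^ (1 - r) := by rw [mul_comm, div_mul_cancel₀ _ (hq i).ne']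
    have h2 : φ t i ^ (r - 1) ≤ (q i * V 0 * Real.exp ((r - 1) * t))⁻¹ := by
      have hrw : φ t i ^ (1 - r) = (φ t i ^ (r - 1))⁻¹ := by
        rw [show (1 : ℝ) - r = -(r - 1) by ring, Real.rpow_neg hx.le]
      rw [hrw] at h1
      have := inv_anti₀ hA h1
      rwa [inv_inv] at this
    calc φ t i = (φ t i ^ (r - 1)) ^ (r - 1)⁻¹ := (Real.rpow_rpow_inv hx.le hr0.ne').symm
      _ ≤ ((q i * V 0 * Real.exp ((r - 1) * t))⁻¹) ^ (r - 1)⁻¹ :=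
          Real.rpow_le_rpow (Real.rpow_pos_of_pos hx _).le h2 (by positivity)
  have hBtend : Tendsto (fun t => ((q i * V 0 * Real.exp ((r - 1) * t))⁻¹) ^ (r - 1)⁻¹)
      atTop (nhds 0) := by
    have hAtend : Tendsto (fun t => q i * V 0 * Real.exp ((r - 1) * t)) atTop atTop := by
      have h1 : Tendsto (fun t : ℝ => (r - 1) * t) atTop atTop :=
        Tendsto.const_mul_atTop hr0 tendsto_id
      exact (Real.tendsto_exp_atTop.comp h1).const_mul_atTop (mul_pos (hq i) hc)
    have hinv : Tendsto (fun t => (q i * V 0 * Real.exp ((r - 1) * t))⁻¹) atTop (nhds 0) :=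
      tendsto_inv_atTop_zero.comp hAtend
    have hcont : ContinuousAt (fun x : ℝ => x ^ (r - 1)⁻¹) 0 :=
      Real.continuousAt_rpow_const 0 _ (Or.inr (by positivity))
    have := hcont.tendsto.comp hinv
    rwa [Real.zero_rpow (by positivity : (r - 1)⁻¹ ≠ 0)] at this
  refine tendsto_of_tendsto_of_tendsto_of_le_of_le' tendsto_const_nhds hBtend ?_ ?_
  · filter_upwards [eventually_ge_atTop (0 : ℝ)] with t ht
    exact (hpos t ht i).le
  · filter_upwards [eventually_ge_atTop (0 : ℝ)] with t ht
    exact hbound t ht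
end

section
/- Let n ≥ 1, r > 1, q̄_i > 0 for i = 1,…,n, let Q ⊆ {1,…,n} be nonempty, and let φ̄ ∈ Δ^{n-1} be the equilibrium with φ̄_i = q̄_i^{1/(1−r)} / Σ_{j∈Q} q̄_j^{1/(1−r)} for i ∈ Q and φ̄_i = 0 for i ∉ Q. Write F_i(x) = q̄_i x_i^r / Σ_{k=1}^n q̄_k x_k^r − x_i, and for each i let w^i ∈ ℝ^n be the direction with w^i_i = 1, w^i_k = −1 for k ∈ Q∖{i}, and w^i_k = 0 for k ∉ Q∪{i}; let D_i be the (one-sided, from s = 0⁺) derivative of s ↦ F_i(φ̄ + s w^i) at s = 0. Then D_i = −1 for i ∉ Q, D_i = r[1 + (|Q|−2) φ̄_i] − 1 for i ∈ Q, and Σ_{i=1}^n D_i = 2r(|Q|−1) − n. (These D_i are the diagonal entries of the Jacobian of F at φ̄ computed taking into account the simplex constraint, so the trace of this Jacobian equals 2r(|Q|−1) − n.) -/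
/-- Diagonal entries (within the simplex) of the Jacobian of the drift
`F_i(x) = q̄_i x_i^r / ∑_k q̄_k x_k^r - x_i` at the equilibrium supported on `Q`:
`D_i = -1` for `i ∉ Q`, `D_i = r (1 + (|Q| - 2) φ̄_i) - 1` for `i ∈ Q`, and
`∑ D_i = 2 r (|Q| - 1) - n` (the trace of the Jacobian). -/
theorem jacobian_trace_at_equilibrium (n : ℕ) (hn : 1 ≤ n)
    (r : ℝ) (hr : 1 < r)
    (q : Fin n → ℝ) (hq : ∀ i, 0 < q i)
    (Q : Finset (Fin n)) (hQ : Q.Nonempty)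
    (φ : Fin n → ℝ)
    (hφ : ∀ i, φ i =
      if i ∈ Q then q i ^ (1 / (1 - r)) / ∑ j ∈ Q, q j ^ (1 / (1 - r)) else 0)
    (F : Fin n → (Fin n → ℝ) → ℝ)
    (hF : ∀ i x, F i x = q i * x i ^ r / (∑ k, q k * x k ^ r) - x i)
    (w : Fin n → Fin n → ℝ)
    (hw : ∀ i k, w i k = if k = i then 1 else if k ∈ Q then -1 else 0)
    (D : Fin n → ℝ)
    (hD : ∀ i, HasDerivWithinAt (fun s : ℝ => F i (fun k => φ k + s * w i k))
      (D i) (Set.Ici 0) 0) :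
    (∀ i ∉ Q, D i = -1) ∧
    (∀ i ∈ Q, D i = r * (1 + ((Q.card : ℝ) - 2) * φ i) - 1) ∧
    (∑ i, D i = 2 * r * ((Q.card : ℝ) - 1) - n) := by
  classical
  have hr0 : (0:ℝ) < r := lt_trans one_pos hr
  have hr1 : r - 1 ≠ 0 := sub_ne_zero.mpr (ne_of_gt hr)
  have h1r : (1:ℝ) - r ≠ 0 := sub_ne_zero.mpr (ne_of_lt hr)
  set c : Fin n → ℝ := fun j => q j ^ (1 / (1 - r)) with hcdef
  have hcpos : ∀ j, 0 < c j := fun j => Real.rpow_pos_of_pos (hq j) _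
  set S : ℝ := ∑ j ∈ Q, c j with hSdef
  have hSpos : 0 < S := Finset.sum_pos (fun j _ => (hcpos j)) hQ
  set E : ℝ := S ^ (1 - r) with hEdef
  have hEpos : 0 < E := Real.rpow_pos_of_pos hSpos _
  have hφQ : ∀ k ∈ Q, φ k = c k / S := fun k hk => by rw [hφ, if_pos hk]
  have hφ0 : ∀ k ∉ Q, φ k = 0 := fun k hk => by rw [hφ]; simp [hk]
  have hφpos : ∀ k ∈ Q, 0 < φ k := fun k hk => by
    rw [hφQ k hk]; exact div_pos (hcpos k) hSpos
  have hsum1 : ∑ k ∈ Q, φ k = 1 := by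
    rw [Finset.sum_congr rfl hφQ, ← Finset.sum_div]
    exact div_self (ne_of_gt hSpos)
  have key : ∀ k ∈ Q, q k * φ k ^ r = φ k * E := by
    intro k hk
    have h1 : q k * c k ^ r = c k := by
      have h2 : (q k ^ (1/(1-r))) ^ r = q k ^ ((1/(1-r)) * r) :=
        (Real.rpow_mul (hq k).le _ _).symm
      rw [hcdef]
      simp only [h2]
      nth_rewrite 1 [← Real.rpow_one (q k)]
      rw [← Real.rpow_add (hq k)]
      congr 1
      field_simp
      ring
    have h2 : E = S / S ^ r := by
      rw [hEdef, Real.rpow_sub hSpos, Real.rpow_one]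
    rw [hφQ k hk, Real.div_rpow (hcpos k).le hSpos.le, h2, mul_div_assoc', h1]
    have hSr : (0:ℝ) < S ^ r := Real.rpow_pos_of_pos hSpos _
    field_simp
  have keyd : ∀ k ∈ Q, q k * φ k ^ (r - 1) = E := by
    intro k hk
    have hp := hφpos k hk
    have h1 : φ k ^ (r - 1) = φ k ^ r / φ k := by
      rw [Real.rpow_sub hp, Real.rpow_one]
    rw [h1, mul_div_assoc', key k hk, mul_comm, mul_div_assoc,
        div_self (ne_of_gt hp), mul_one]
  have keyden : (∑ k, q k * φ k ^ r) = E := by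
    rw [← Finset.sum_subset (Finset.subset_univ Q) (fun k _ hk => by
      rw [hφ0 k hk, Real.zero_rpow (ne_of_gt hr0), mul_zero])]
    rw [Finset.sum_congr rfl key, ← Finset.sum_mul, hsum1, one_mul]
  -- main per-index computation
  have hval : ∀ i, D i =
      (if i ∈ Q then r * (1 + ((Q.card : ℝ) - 2) * φ i) - 1 else -1) := by
    intro i
    have hterm : ∀ k, HasDerivAt (fun s : ℝ => q k * (φ k + s * w i k) ^ r)
        (q k * (w i k * r * φ k ^ (r - 1))) 0 := by
      intro k
      have h0 : HasDerivAt (fun s : ℝ => φ k + s * w i k) (w i k) 0 := by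
        simpa using ((hasDerivAt_id (0:ℝ)).mul_const (w i k)).const_add (φ k)
      have h1 := (h0.rpow_const (Or.inr hr.le)).const_mul (q k)
      simpa using h1
    have hden : HasDerivAt (fun s : ℝ => ∑ k, q k * (φ k + s * w i k) ^ r)
        (∑ k, q k * (w i k * r * φ k ^ (r - 1))) 0 :=
      HasDerivAt.fun_sum (fun k _ => hterm k)
    have hden0 : (∑ k, q k * (φ k + (0:ℝ) * w i k) ^ r) = E := by
      simp only [zero_mul, add_zero]; exact keyden
    have hlin : HasDerivAt (fun s : ℝ => φ i + s * w i i) (w i i) 0 := by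
      simpa using ((hasDerivAt_id (0:ℝ)).mul_const (w i i)).const_add (φ i)
    have hG := ((hterm i).div hden (by rw [hden0]; exact ne_of_gt hEpos)).sub hlin
    have hDi : HasDerivWithinAt (fun s : ℝ =>
        q i * (φ i + s * w i i) ^ r / (∑ k, q k * (φ k + s * w i k) ^ r)
          - (φ i + s * w i i)) (D i) (Set.Ici 0) 0 := by
      have h := hD i
      simp only [hF] at h
      exact h
    have hid := (uniqueDiffOn_Ici (0:ℝ) 0 Set.self_mem_Ici).eq_deriv _
      hDi hG.hasDerivWithinAt
    rw [hid]
    have hwii : w i i = 1 := by rw [hw]; simp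
    by_cases hiQ : i ∈ Q
    · rw [if_pos hiQ]
      have hnum0 : q i * (φ i + (0:ℝ) * w i i) ^ r = φ i * E := by
        simp only [zero_mul, add_zero]; exact key i hiQ
      have hnum' : q i * (w i i * r * φ i ^ (r - 1)) = r * E := by
        rw [hwii, one_mul]
        rw [show q i * (r * φ i ^ (r-1)) = r * (q i * φ i ^ (r-1)) by ring,
            keyd i hiQ]
      have hsumw : (∑ k, w i k) = 2 - (Q.card : ℝ) := by
        have hptw : ∀ k, w i k =
            (if k = i then (2:ℝ) else 0) + (if k ∈ Q then (-1:ℝ) else 0) := by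
          intro k
          rw [hw]
          by_cases h1 : k = i
          · subst h1; simp [hiQ]; norm_num
          · simp [h1]
        rw [Finset.sum_congr rfl (fun k _ => hptw k), Finset.sum_add_distrib]
        rw [Finset.sum_ite_eq' Finset.univ i (fun _ => (2:ℝ))]
        simp [Finset.sum_ite_mem]
        ring
      have hterm2 : ∀ k, q k * (w i k * r * φ k ^ (r - 1)) = w i k * (r * E) := by
        intro k
        by_cases hk : k ∈ Q
        · rw [show q k * (w i k * r * φ k ^ (r-1))
              = w i k * (r * (q k * φ k ^ (r-1))) by ring, keyd k hk]
        · have hki : k ≠ i := fun h => hk (h ▸ hiQ)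
          rw [hw, if_neg hki, if_neg hk]
          ring
      have hden' : (∑ k, q k * (w i k * r * φ k ^ (r - 1)))
          = (2 - (Q.card : ℝ)) * (r * E) := by
        rw [Finset.sum_congr rfl (fun k _ => hterm2 k), ← Finset.sum_mul, hsumw]
      rw [hnum', hnum0, hden', hden0, hwii]
      have hE2 : E ≠ 0 := ne_of_gt hEpos
      field_simp
      ring
    · rw [if_neg hiQ]
      have hφi : φ i = 0 := hφ0 i hiQ
      have hnum0 : q i * (φ i + (0:ℝ) * w i i) ^ r = 0 := by
        simp [hφi, Real.zero_rpow (ne_of_gt hr0)]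
      have hnum' : q i * (w i i * r * φ i ^ (r - 1)) = 0 := by
        simp [hφi, Real.zero_rpow hr1]
      rw [hnum', hnum0, hwii]
      rw [zero_mul, zero_mul, sub_zero, zero_div]
      norm_num
  refine ⟨fun i hi => by rw [hval i, if_neg hi],
    fun i hi => by rw [hval i, if_pos hi], ?_⟩
  rw [Finset.sum_congr rfl (fun i _ => hval i), Finset.sum_ite,
      Finset.filter_mem_eq_inter, Finset.univ_inter]
  have h1 : ∑ i ∈ Q, (r * (1 + ((Q.card : ℝ) - 2) * φ i) - 1)
      = r * ((Q.card : ℝ) + ((Q.card : ℝ) - 2)) - Q.card := by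
    rw [Finset.sum_sub_distrib, ← Finset.mul_sum, Finset.sum_add_distrib,
        ← Finset.mul_sum, hsum1]
    simp [Finset.sum_const, nsmul_eq_mul, mul_one]
  have h2 : (Finset.univ.filter (fun i => i ∉ Q)).card = n - Q.card := by
    rw [Finset.filter_not, Finset.filter_mem_eq_inter, Finset.univ_inter,
        Finset.card_sdiff_of_subset (Finset.subset_univ Q)]
    simp
  have hcle : Q.card ≤ n := by
    simpa using Finset.card_le_univ Q
  rw [h1, Finset.sum_const, h2, nsmul_eq_mul]
  push_cast [hcle]
  ring
end

section
/- Let n ≥ 1, r > 0 with r ≠ 1, and q̄_i > 0 for i = 1,…,n, and let φ* be the inner equilibrium with φ*_i = q̄_i^{1/(1−r)} / Σ_{j=1}^n q̄_j^{1/(1−r)}. Write F_i(x) = q̄_i x_i^r / Σ_{k=1}^n q̄_k x_k^r − x_i, and for each i let D_i be the derivative at s = 0 of s ↦ F_i(φ* + s w^i), where w^i ∈ ℝ^n has w^i_i = 1 and w^i_k = −1 for all k ≠ i. Then D_i = r[1 + (n−2) φ*_i] − 1 for every i, and Σ_{i=1}^n D_i = 2r(n−1) − n. -/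
/-- Diagonal entries (within the simplex) of the Jacobian of the drift
`F_i(x) = q̄_i x_i^r / ∑_k q̄_k x_k^r - x_i` at the inner equilibrium `φ*`:
`D_i = r (1 + (n - 2) φ*_i) - 1` for each `i`, and `∑ D_i = 2 r (n - 1) - n`. -/
theorem jacobian_trace_at_inner_equilibrium (n : ℕ) (hn : 1 ≤ n)
    (r : ℝ) (hr0 : 0 < r) (hr1 : r ≠ 1)
    (q : Fin n → ℝ) (hq : ∀ i, 0 < q i)
    (φs : Fin n → ℝ)
    (hφs : ∀ i, φs i = q i ^ (1 / (1 - r)) / ∑ j, q j ^ (1 / (1 - r)))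
    (F : Fin n → (Fin n → ℝ) → ℝ)
    (hF : ∀ i x, F i x = q i * x i ^ r / (∑ k, q k * x k ^ r) - x i)
    (w : Fin n → Fin n → ℝ)
    (hw : ∀ i k, w i k = if k = i then 1 else -1)
    (D : Fin n → ℝ)
    (hD : ∀ i, HasDerivAt (fun s : ℝ => F i (fun k => φs k + s * w i k)) (D i) 0) :
    (∀ i, D i = r * (1 + ((n : ℝ) - 2) * φs i) - 1) ∧
    (∑ i, D i = 2 * r * ((n : ℝ) - 1) - n) := by
  haveI : NeZero n := ⟨Nat.one_le_iff_ne_zero.mp hn⟩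
  set S : ℝ := ∑ j, q j ^ (1 / (1 - r)) with hSdef
  have hSpos : 0 < S :=
    Finset.sum_pos (fun j _ => Real.rpow_pos_of_pos (hq j) _) Finset.univ_nonempty
  have hφpos : ∀ k, 0 < φs k := fun k => by
    rw [hφs]; exact div_pos (Real.rpow_pos_of_pos (hq k) _) hSpos
  have hqa : ∀ k, q k * (q k ^ (1 / (1 - r))) ^ r = q k ^ (1 / (1 - r)) := by
    intro k
    have hne : (1 : ℝ) - r ≠ 0 := sub_ne_zero.mpr (Ne.symm hr1)
    have hexp : (1 : ℝ) + (1 / (1 - r)) * r = 1 / (1 - r) := by field_simp; ring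
    calc q k * (q k ^ (1 / (1 - r))) ^ r
        = q k ^ (1 : ℝ) * q k ^ ((1 / (1 - r)) * r) := by
          rw [Real.rpow_one, ← Real.rpow_mul (hq k).le]
      _ = q k ^ ((1 : ℝ) + (1 / (1 - r)) * r) := (Real.rpow_add (hq k) _ _).symm
      _ = _ := by rw [hexp]
  have hkey : ∀ k, q k * φs k ^ r = φs k * S ^ (1 - r) := by
    intro k
    rw [hφs k,
      Real.div_rpow (Real.rpow_pos_of_pos (hq k) _).le hSpos.le]
    have h1 : q k * ((q k ^ (1 / (1 - r))) ^ r / S ^ r)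
        = (q k * (q k ^ (1 / (1 - r))) ^ r) / S ^ r := by ring
    rw [h1, hqa k, Real.rpow_sub hSpos, Real.rpow_one]
    field_simp
  have hsum1 : ∑ k, φs k = 1 := by
    have : ∑ k, φs k = (∑ k, q k ^ (1 / (1 - r))) / S := by
      rw [Finset.sum_div]; exact Finset.sum_congr rfl fun k _ => hφs k
    rw [this, ← hSdef, div_self hSpos.ne']
  have hden0 : ∑ k, q k * φs k ^ r = S ^ (1 - r) := by
    rw [Finset.sum_congr rfl fun k _ => hkey k, ← Finset.sum_mul, hsum1, one_mul]
  have hTpos : 0 < S ^ (1 - r) := Real.rpow_pos_of_pos hSpos _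
  have hsumw : ∀ i, ∑ k, w i k = 2 - (n : ℝ) := by
    intro i
    have h : ∀ k, w i k = (if k = i then (2 : ℝ) else 0) - 1 := by
      intro k; rw [hw]; split <;> norm_num
    rw [Finset.sum_congr rfl fun k _ => h k, Finset.sum_sub_distrib,
      Finset.sum_ite_eq' Finset.univ i fun _ => (2 : ℝ)]
    simp
  have hderiv : ∀ i, HasDerivAt (fun s : ℝ => F i (fun k => φs k + s * w i k))
      (r * (1 + ((n : ℝ) - 2) * φs i) - 1) 0 := by
    intro i
    have hfun : (fun s : ℝ => F i (fun k => φs k + s * w i k))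
        = fun s => (q i * (φs i + s * w i i) ^ r) /
            (∑ k, q k * (φs k + s * w i k) ^ r) - (φs i + s * w i i) := by
      funext s; rw [hF]
    rw [hfun]
    have hb : ∀ k, HasDerivAt (fun s : ℝ => φs k + s * w i k) (w i k) 0 := by
      intro k
      simpa using ((hasDerivAt_id (0 : ℝ)).mul_const (w i k)).const_add (φs k)
    have hpow : ∀ k, HasDerivAt (fun s : ℝ => (φs k + s * w i k) ^ r)
        (r * φs k ^ (r - 1) * w i k) 0 := by
      intro k
      have h0 : φs k + 0 * w i k = φs k := by ring
      have h := (Real.hasDerivAt_rpow_const (p := r) (x := φs k + 0 * w i k)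
        (Or.inl (by rw [h0]; exact (hφpos k).ne'))).comp 0 (hb k)
      simpa [h0, mul_assoc, Function.comp_def] using h
    have hnum : HasDerivAt (fun s : ℝ => q i * (φs i + s * w i i) ^ r)
        (q i * (r * φs i ^ (r - 1) * w i i)) 0 := (hpow i).const_mul (q i)
    have hden : HasDerivAt (fun s : ℝ => ∑ k, q k * (φs k + s * w i k) ^ r)
        (∑ k, q k * (r * φs k ^ (r - 1) * w i k)) 0 :=
      HasDerivAt.fun_sum (fun k _ => (hpow k).const_mul (q k))
    have hcoef : ∀ k, q k * (r * φs k ^ (r - 1) * w i k) = r * S ^ (1 - r) * w i k := by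
      intro k
      have h1 : φs k ^ (r - 1) = φs k ^ r / φs k := by
        rw [Real.rpow_sub (hφpos k), Real.rpow_one]
      have h2 : q k * (r * (φs k ^ r / φs k) * w i k)
          = r * (q k * φs k ^ r) / φs k * w i k := by ring
      rw [h1, h2, hkey k, mul_comm (φs k) (S ^ (1 - r)), mul_div_assoc,
        mul_div_assoc, div_self (hφpos k).ne', mul_one]
    have hden0ne : (∑ k, q k * (φs k + 0 * w i k) ^ r) ≠ 0 := by
      have : (∑ k, q k * (φs k + 0 * w i k) ^ r) = ∑ k, q k * φs k ^ r := by
        apply Finset.sum_congr rfl; intro k _; norm_num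
      rw [this, hden0]; exact hTpos.ne'
    have hfull := (hnum.div hden hden0ne).sub (hb i)
    convert hfull using 1
    case e'_4 => rfl
    case e'_5 => rfl
    case e'_8 => rfl
    have hsimp : (∑ k, q k * (φs k + 0 * w i k) ^ r) = S ^ (1 - r) := by
      rw [← hden0]; apply Finset.sum_congr rfl; intro k _; norm_num
    have hdsum : (∑ k, q k * (r * φs k ^ (r - 1) * w i k))
        = r * S ^ (1 - r) * (2 - (n : ℝ)) := by
      rw [Finset.sum_congr rfl fun k _ => hcoef k, ← Finset.mul_sum, hsumw i]
    have hwii : w i i = 1 := by rw [hw]; simp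
    rw [hsimp, hdsum, hcoef i, hwii]
    have hnum0 : q i * (φs i + 0 * 1) ^ r = φs i * S ^ (1 - r) := by
      rw [show φs i + 0 * 1 = φs i by ring, hkey i]
    rw [hnum0]
    field_simp
    ring
  refine ⟨fun i => (hD i).unique (hderiv i), ?_⟩
  calc ∑ i, D i = ∑ i, (r * (1 + ((n : ℝ) - 2) * φs i) - 1) :=
        Finset.sum_congr rfl fun i _ => (hD i).unique (hderiv i)
    _ = 2 * r * ((n : ℝ) - 1) - n := by
        simp only [mul_add, mul_one, Finset.sum_sub_distrib, Finset.sum_add_distrib,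
          Finset.sum_const, Finset.card_univ, Fintype.card_fin, nsmul_eq_mul,
          mul_one, ← Finset.mul_sum, hsum1]
        ring
end

section
/- For sublinear social signals the quality ranking need not be asymptotically optimal: there exist qualities q₁ ≥ q₂ ≥ q₃ > 0 and visibilities v₁ ≥ v₂ ≥ v₃ > 0 and r ∈ (0,1) such that swapping the positions of products 2 and 3 yields a strictly larger expected number of purchases at equilibrium. Concretely, for q₁ = 1, q₂ = 0.261, q₃ = 0.002, v₁ = 1, v₂ = 0.720, v₃ = 0.229, and r = 0.3, one has (1 + (0.720·0.261)^{10/7} + (0.229·0.002)^{10/7}) / (1 + 0.720·(0.720·0.261)^{3/7} + 0.229·(0.229·0.002)^{3/7}) < (1 + (0.720·0.002)^{10/7} + (0.229·0.261)^{10/7}) / (1 + 0.720·(0.720·0.002)^{3/7} + 0.229·(0.229·0.261)^{3/7}). -/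
lemma pow7_rpow37 {x : ℝ} (hx : 0 < x) : (x ^ ((3:ℝ)/7)) ^ (7:ℕ) = x ^ (3:ℕ) := by
  rw [← Real.rpow_natCast (x ^ ((3:ℝ)/7)) 7, ← Real.rpow_mul hx.le,
    show ((3:ℝ)/7 * (7:ℕ)) = ((3:ℕ):ℝ) by norm_num, Real.rpow_natCast]

lemma le_rpow37 {x a : ℝ} (hx : 0 < x) (h : a ^ (7:ℕ) ≤ x ^ (3:ℕ)) :
    a ≤ x ^ ((3:ℝ)/7) := by
  have hnn : (0:ℝ) ≤ x ^ ((3:ℝ)/7) := Real.rpow_nonneg hx.le _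
  have e := pow7_rpow37 hx
  exact le_of_pow_le_pow_left₀ (n := 7) (by norm_num) hnn (by rw [e]; exact h)

lemma rpow37_le {x b : ℝ} (hx : 0 < x) (hb : 0 ≤ b) (h : x ^ (3:ℕ) ≤ b ^ (7:ℕ)) :
    x ^ ((3:ℝ)/7) ≤ b := by
  have e := pow7_rpow37 hx
  exact le_of_pow_le_pow_left₀ (n := 7) (by norm_num) hb (by rw [e]; exact h)

/-- For sublinear social signals the quality ranking need not be asymptotically
optimal: with `q₁ = 1 ≥ q₂ = 0.261 ≥ q₃ = 0.002 > 0`, `v₁ = 1 ≥ v₂ = 0.720 ≥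
v₃ = 0.229 > 0` and `r = 0.3`, swapping the positions of products 2 and 3 yields a
strictly larger expected number of purchases per period at equilibrium. -/
theorem quality_ranking_not_optimal_sublinear :
    ∃ q₁ q₂ q₃ v₁ v₂ v₃ r : ℝ,
      q₁ = 1 ∧ q₂ = 0.261 ∧ q₃ = 0.002 ∧
      v₁ = 1 ∧ v₂ = 0.720 ∧ v₃ = 0.229 ∧ r = 0.3 ∧
      q₂ ≤ q₁ ∧ q₃ ≤ q₂ ∧ 0 < q₃ ∧ v₂ ≤ v₁ ∧ v₃ ≤ v₂ ∧ 0 < v₃ ∧ 0 < r ∧ r < 1 ∧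
      (v₁ * q₁ * (v₁ * q₁) ^ (r / (1 - r)) + v₂ * q₂ * (v₂ * q₂) ^ (r / (1 - r)) +
            v₃ * q₃ * (v₃ * q₃) ^ (r / (1 - r))) /
          (v₁ * (v₁ * q₁) ^ (r / (1 - r)) + v₂ * (v₂ * q₂) ^ (r / (1 - r)) +
            v₃ * (v₃ * q₃) ^ (r / (1 - r)))
        < (v₁ * q₁ * (v₁ * q₁) ^ (r / (1 - r)) + v₂ * q₃ * (v₂ * q₃) ^ (r / (1 - r)) +
            v₃ * q₂ * (v₃ * q₂) ^ (r / (1 - r))) /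
          (v₁ * (v₁ * q₁) ^ (r / (1 - r)) + v₂ * (v₂ * q₃) ^ (r / (1 - r)) +
            v₃ * (v₃ * q₂) ^ (r / (1 - r))) := by
  refine ⟨1, 0.261, 0.002, 1, 0.720, 0.229, 0.3, rfl, rfl, rfl, rfl, rfl, rfl, rfl,
    by norm_num, by norm_num, by norm_num, by norm_num, by norm_num, by norm_num,
    by norm_num, by norm_num, ?_⟩
  rw [show (0.3:ℝ) / (1 - 0.3) = 3/7 by norm_num,
    show ((1:ℝ) * 1) = 1 by norm_num, Real.one_rpow]
  set A := ((0.720:ℝ) * 0.261) ^ ((3:ℝ)/7) with hAdef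
  set B := ((0.229:ℝ) * 0.002) ^ ((3:ℝ)/7) with hBdef
  set C := ((0.720:ℝ) * 0.002) ^ ((3:ℝ)/7) with hCdef
  set E := ((0.229:ℝ) * 0.261) ^ ((3:ℝ)/7) with hEdef
  have hA : (0.4:ℝ) ≤ A := le_rpow37 (by norm_num) (by norm_num)
  have hB : (0:ℝ) ≤ B := Real.rpow_nonneg (by norm_num) _
  have hC0 : (0:ℝ) ≤ C := Real.rpow_nonneg (by norm_num) _
  have hE0 : (0:ℝ) ≤ E := Real.rpow_nonneg (by norm_num) _
  have hC : C ≤ 0.07 := rpow37_le (by norm_num) (by norm_num) (by norm_num)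
  have hE : E ≤ 0.31 := rpow37_le (by norm_num) (by norm_num) (by norm_num)
  have hD1 : (0:ℝ) < 1 * 1 + 0.720 * A + 0.229 * B := by nlinarith
  have hD2 : (0:ℝ) < 1 * 1 + 0.720 * C + 0.229 * E := by nlinarith
  have h1 : (1 * 1 * 1 + 0.720 * 0.261 * A + 0.229 * 0.002 * B) /
      (1 * 1 + 0.720 * A + 0.229 * B) < 0.85 := by
    rw [div_lt_iff₀ hD1]; nlinarith
  have h2 : (0.85:ℝ) < (1 * 1 * 1 + 0.720 * 0.002 * C + 0.229 * 0.261 * E) /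
      (1 * 1 + 0.720 * C + 0.229 * E) := by
    rw [lt_div_iff₀ hD2]; nlinarith
  linarith
end
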